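/- Let P be a finite set of points in ℝ², let 0 < α ≤ 1, and let K ⊆ P with dist(p,q) < 2 for all distinct p,q ∈ K (so K is a clique of the unit disk graph G(P,𝟏)). If |K| > (2/α + 1)², then for every r : P → ℝ with α ≤ r(p) ≤ 1 for all p, the open-disk intersection graph G(P,r) has at least one edge; and if |K| > 6(2/α + 1)², then for every such r, G(P,r) contains a cycle. -/

import Mathlib

open scoped Classical

abbrev Pt := EuclideanSpace ℝ (Fin 2)

/-- The open-disk intersection graph of the points of `P` with radius assignment `r`:
distinct points `p, q ∈ P` are adjacent iff `dist p q < r p + r q`. -/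
def diskGraph (P : Finset Pt) (r : Pt → ℝ) : SimpleGraph {x : Pt // x ∈ P} where
  Adj p q := p ≠ q ∧ dist (p : Pt) (q : Pt) < r p + r q
  symm := ⟨fun p q h => ⟨h.1.symm, by rw [dist_comm, add_comm]; exact h.2⟩⟩
  loopless := ⟨fun p h => h.1 rfl⟩
set_option maxHeartbeats 1000000

open Metric MeasureTheory
open scoped ENNReal

lemma coord_abs_le_dist (x y : Pt) (i : Fin 2) : |x i - y i| ≤ dist x y := by
  rw [EuclideanSpace.dist_eq, ← Real.sqrt_sq_eq_abs]
  apply Real.sqrt_le_sqrt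
  rw [show (x i - y i) ^ 2 = dist (x i) (y i) ^ 2 by rw [Real.dist_eq, sq_abs]]
  exact Finset.single_le_sum (f := fun j => dist (x j) (y j) ^ 2) (fun j _ => sq_nonneg _) (Finset.mem_univ i)

lemma packing_bound (α : ℝ) (hα : 0 < α) (p₀ : Pt) (S : Finset Pt)
    (hball : ∀ p ∈ S, dist p p₀ < 2)
    (hsep : ∀ p ∈ S, ∀ q ∈ S, p ≠ q → 2 * α ≤ dist p q) :
    (S.card : ℝ) ≤ (2 / α + 1) ^ 2 := by
  have hdisj : (S : Set Pt).PairwiseDisjoint (fun p => Metric.ball p α) := by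
    intro p hp q hq hpq
    refine Set.disjoint_left.mpr fun x hxp hxq => ?_
    rw [mem_ball] at hxp hxq
    have h1 := hsep p hp q hq hpq
    have h2 : dist p q ≤ dist p x + dist x q := dist_triangle _ _ _
    rw [dist_comm p x] at h2
    linarith
  have hmeas : volume (⋃ p ∈ S, ball p α) = ∑ p ∈ S, volume (ball p α) :=
    measure_biUnion_finset hdisj (fun p _ => measurableSet_ball)
  have hsub : (⋃ p ∈ S, ball p α) ⊆ ball p₀ (2 + α) := by
    intro x hx
    simp only [Set.mem_iUnion] at hx
    obtain ⟨p, hp, hxp⟩ := hx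
    rw [mem_ball] at hxp ⊢
    have := dist_triangle x p p₀
    have := hball p hp
    linarith
  set c : ℝ≥0∞ := ENNReal.ofReal (Real.sqrt Real.pi ^ Fintype.card (Fin 2) /
      Real.Gamma (Fintype.card (Fin 2) / 2 + 1)) with hc
  have hvol : ∀ (x : Pt) (r : ℝ), volume (ball x r) = ENNReal.ofReal r ^ 2 * c := by
    intro x r
    rw [EuclideanSpace.volume_ball, hc]
    norm_num
  have hc0 : 0 < c := by
    rw [hc]
    apply ENNReal.ofReal_pos.mpr
    apply div_pos
    · have := Real.pi_pos
      positivity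
    · exact Real.Gamma_pos_of_pos (by norm_num)
  have hcT : c ≠ ⊤ := ENNReal.ofReal_ne_top
  have key : (S.card : ℝ≥0∞) * (ENNReal.ofReal α ^ 2 * c) ≤ ENNReal.ofReal (2 + α) ^ 2 * c := by
    calc (S.card : ℝ≥0∞) * (ENNReal.ofReal α ^ 2 * c)
        = ∑ p ∈ S, volume (ball p α) := by
          rw [Finset.sum_congr rfl (fun p _ => hvol p α), Finset.sum_const, nsmul_eq_mul]
      _ = volume (⋃ p ∈ S, ball p α) := hmeas.symm
      _ ≤ volume (ball p₀ (2 + α)) := measure_mono hsub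
      _ = ENNReal.ofReal (2 + α) ^ 2 * c := hvol p₀ (2 + α)
  rw [← mul_assoc, ENNReal.mul_le_mul_iff_left hc0.ne' hcT] at key
  have key2 : (S.card : ℝ) * α ^ 2 ≤ (2 + α) ^ 2 := by
    have : ENNReal.ofReal ((S.card : ℝ) * α ^ 2) ≤ ENNReal.ofReal ((2 + α) ^ 2) := by
      rw [ENNReal.ofReal_mul (by positivity), ENNReal.ofReal_pow hα.le,
        ENNReal.ofReal_pow (by linarith), ENNReal.ofReal_natCast]
      exact key
    exact (ENNReal.ofReal_le_ofReal_iff (by positivity)).mp this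
  have heq : (2 / α + 1) ^ 2 * α ^ 2 = (2 + α) ^ 2 := by field_simp
  have hα2 : 0 < α ^ 2 := by positivity
  nlinarith [key2, heq]

lemma exists_close_pair (α : ℝ) (hα : 0 < α) (K : Finset Pt)
    (hclique : ∀ p ∈ K, ∀ q ∈ K, p ≠ q → dist p q < 2)
    (hcard : ((2 / α + 1) ^ 2 : ℝ) < K.card) :
    ∃ p ∈ K, ∃ q ∈ K, p ≠ q ∧ dist p q < 2 * α := by
  by_contra h
  push_neg at h
  have hne : K.Nonempty := by
    rw [← Finset.card_pos, ← Nat.cast_pos (α := ℝ)]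
    nlinarith [sq_nonneg (2 / α + 1)]
  obtain ⟨p₀, hp₀⟩ := hne
  have hb := packing_bound α hα p₀ K (fun p hp => by
    rcases eq_or_ne p p₀ with rfl | hne
    · simp
    · exact hclique p hp p₀ hp₀ hne) h
  linarith

lemma icc_card_le (x s : ℝ) (hs : 0 < s) :
    ((Finset.Icc ⌊(x - 2) / s⌋ ⌊(x + 2) / s⌋).card : ℝ) ≤ 4 / s + 2 := by
  rw [Int.card_Icc]
  have h1 : ((⌊(x + 2) / s⌋ : ℤ) : ℝ) ≤ (x + 2) / s := Int.floor_le _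
  have h2 : (x - 2) / s - 1 < ((⌊(x - 2) / s⌋ : ℤ) : ℝ) := Int.sub_one_lt_floor _
  have hle : ⌊(x - 2) / s⌋ ≤ ⌊(x + 2) / s⌋ :=
    Int.floor_le_floor ((div_le_div_iff_of_pos_right hs).mpr (by linarith))
  have key : (((⌊(x + 2) / s⌋ + 1 - ⌊(x - 2) / s⌋).toNat : ℤ) : ℝ) ≤ 4 / s + 2 := by
    rw [Int.toNat_of_nonneg (by omega)]
    push_cast
    have he : (x + 2) / s - (x - 2) / s = 4 / s := by field_simp; ring
    linarith
  exact_mod_cast key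

lemma close_of_same_cell (α s : ℝ) (hα : 0 < α) (hs : 0 < s) (hs2 : s ^ 2 = 2 * α ^ 2)
    (a b : Pt) (h0 : ⌊a 0 / s⌋ = ⌊b 0 / s⌋) (h1 : ⌊a 1 / s⌋ = ⌊b 1 / s⌋) :
    dist a b < 2 * α := by
  have key : ∀ u v : ℝ, ⌊u / s⌋ = ⌊v / s⌋ → |u - v| < s := by
    intro u v huv
    have l1 : ((⌊u / s⌋ : ℤ) : ℝ) ≤ u / s := Int.floor_le _
    have l2 : u / s < ⌊u / s⌋ + 1 := Int.lt_floor_add_one _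
    have l3 : ((⌊v / s⌋ : ℤ) : ℝ) ≤ v / s := Int.floor_le _
    have l4 : v / s < ⌊v / s⌋ + 1 := Int.lt_floor_add_one _
    rw [huv] at l1 l2
    have g1 : u / s - v / s < 1 := by linarith
    have g2 : v / s - u / s < 1 := by linarith
    have e1 : (u / s - v / s) * s = u - v := by field_simp
    have e2 : (v / s - u / s) * s = v - u := by field_simp
    rw [abs_sub_lt_iff]
    constructor
    · have := mul_lt_mul_of_pos_right g1 hs
      rw [e1, one_mul] at this; exact this
    · have := mul_lt_mul_of_pos_right g2 hs
      rw [e2, one_mul] at this; exact this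
  have k0 := key _ _ h0
  have k1 := key _ _ h1
  have hd : dist a b ^ 2 < (2 * α) ^ 2 := by
    rw [EuclideanSpace.dist_eq, Real.sq_sqrt (Finset.sum_nonneg fun i _ => sq_nonneg _),
      Fin.sum_univ_two, Real.dist_eq, Real.dist_eq]
    nlinarith [abs_nonneg (a 0 - b 0), abs_nonneg (a 1 - b 1), sq_abs (a 0 - b 0), sq_abs (a 1 - b 1)]
  exact lt_of_pow_lt_pow_left₀ 2 (by positivity) hd

lemma exists_close_triple (α : ℝ) (hα : 0 < α) (hα1 : α ≤ 1) (K : Finset Pt)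
    (hclique : ∀ p ∈ K, ∀ q ∈ K, p ≠ q → dist p q < 2)
    (hcard : ((6 * (2 / α + 1) ^ 2 : ℝ)) < K.card) :
    ∃ a ∈ K, ∃ b ∈ K, ∃ c ∈ K, a ≠ b ∧ a ≠ c ∧ b ≠ c ∧
      dist a b < 2 * α ∧ dist a c < 2 * α ∧ dist b c < 2 * α := by
  have hne : K.Nonempty := by
    rw [← Finset.card_pos, ← Nat.cast_pos (α := ℝ)]
    nlinarith [sq_nonneg (2 / α + 1)]
  obtain ⟨p₀, hp₀⟩ := hne
  set s : ℝ := Real.sqrt 2 * α with hsdef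
  have hsqrt2 : Real.sqrt 2 ^ 2 = 2 := Real.sq_sqrt (by norm_num)
  have hsqrt2pos : 0 < Real.sqrt 2 := Real.sqrt_pos.mpr (by norm_num)
  have hs : 0 < s := mul_pos hsqrt2pos hα
  have hs2 : s ^ 2 = 2 * α ^ 2 := by rw [hsdef, mul_pow, hsqrt2]
  set f : Pt → ℤ × ℤ := fun p => (⌊p 0 / s⌋, ⌊p 1 / s⌋) with hf
  set t : Finset (ℤ × ℤ) :=
    Finset.Icc ⌊(p₀ 0 - 2) / s⌋ ⌊(p₀ 0 + 2) / s⌋ ×ˢ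
    Finset.Icc ⌊(p₀ 1 - 2) / s⌋ ⌊(p₀ 1 + 2) / s⌋ with ht
  have hmaps : ∀ p ∈ K, f p ∈ t := by
    intro p hp
    have hd : dist p p₀ < 2 := by
      rcases eq_or_ne p p₀ with rfl | hne
      · simp
      · exact hclique p hp p₀ hp₀ hne
    have d0 : |p 0 - p₀ 0| < 2 := lt_of_le_of_lt (coord_abs_le_dist p p₀ 0) hd
    have d1 : |p 1 - p₀ 1| < 2 := lt_of_le_of_lt (coord_abs_le_dist p p₀ 1) hd
    rw [abs_sub_lt_iff] at d0 d1
    rw [ht, Finset.mem_product, Finset.mem_Icc, Finset.mem_Icc]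
    simp only [hf]
    exact ⟨⟨Int.floor_le_floor ((div_le_div_iff_of_pos_right hs).mpr (by linarith [d0.2])),
            Int.floor_le_floor ((div_le_div_iff_of_pos_right hs).mpr (by linarith [d0.1]))⟩,
           ⟨Int.floor_le_floor ((div_le_div_iff_of_pos_right hs).mpr (by linarith [d1.2])),
            Int.floor_le_floor ((div_le_div_iff_of_pos_right hs).mpr (by linarith [d1.1]))⟩⟩
  have htcard : (t.card : ℝ) * 2 < K.card := by
    have h1 := icc_card_le (p₀ 0) s hs
    have h2 := icc_card_le (p₀ 1) s hs
    have ht2 : (t.card : ℝ) ≤ (4 / s + 2) ^ 2 := by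
      rw [ht, Finset.card_product]
      push_cast
      have n1 : (0:ℝ) ≤ ((Finset.Icc ⌊(p₀ 0 - 2) / s⌋ ⌊(p₀ 0 + 2) / s⌋).card : ℝ) :=
        Nat.cast_nonneg _
      have hspos : (0:ℝ) < 4 / s + 2 := by positivity
      nlinarith [h1, h2]
    have hkey : (4 / s + 2) ^ 2 * 2 ≤ 6 * (2 / α + 1) ^ 2 := by
      have e1 : (4 / s + 2) ^ 2 * 2 = ((4 + 2 * s) ^ 2 * 2) / s ^ 2 := by field_simp
      have e2 : 6 * (2 / α + 1) ^ 2 = (6 * (2 + α) ^ 2) / α ^ 2 := by field_simp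
      rw [e1, e2, div_le_div_iff₀ (by positivity) (by positivity)]
      have hsle : s ≤ 1.5 * α := by
        rw [hsdef]
        have h32 : Real.sqrt 2 ≤ 1.5 := by nlinarith [hsqrt2, hsqrt2pos]
        nlinarith
      have inner : (4 + 2 * s) ^ 2 ≤ 6 * (2 + α) ^ 2 := by
        nlinarith [hsle, hs2, hα, hα1, hs]
      nlinarith [mul_le_mul_of_nonneg_right inner
        (by positivity : (0:ℝ) ≤ 2 * α ^ 2), hs2]
    have ht2' : (t.card : ℝ) * 2 ≤ (4 / s + 2) ^ 2 * 2 := by linarith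
    linarith
  obtain ⟨y, hy, hfib⟩ := Finset.exists_lt_card_fiber_of_mul_lt_card_of_maps_to hmaps
    (by exact_mod_cast htcard)
  obtain ⟨a, b, c, ha, hb, hc, hab, hac, hbc⟩ := Finset.two_lt_card_iff.mp hfib
  simp only [Finset.mem_filter] at ha hb hc
  have fab : f a = f b := ha.2.trans hb.2.symm
  have fac : f a = f c := ha.2.trans hc.2.symm
  have fbc : f b = f c := hb.2.trans hc.2.symm
  exact ⟨a, ha.1, b, hb.1, c, hc.1, hab, hac, hbc,
    close_of_same_cell α s hα hs hs2 a b (congrArg Prod.fst fab) (congrArg Prod.snd fab),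
    close_of_same_cell α s hα hs hs2 a c (congrArg Prod.fst fac) (congrArg Prod.snd fac),
    close_of_same_cell α s hα hs hs2 b c (congrArg Prod.fst fbc) (congrArg Prod.snd fbc)⟩

/-- A clique of the unit disk graph of size larger than (2/α+1)² forces an edge in any
[α,1]-shrinking, and one of size larger than 6(2/α+1)² forces a cycle. -/
theorem stmt_4 (P : Finset Pt) (α : ℝ) (hα₀ : 0 < α) (hα₁ : α ≤ 1)
    (K : Finset Pt) (hKP : K ⊆ P)
    (hclique : ∀ p ∈ K, ∀ q ∈ K, p ≠ q → dist p q < 2) :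
    (((2 / α + 1) ^ 2 : ℝ) < K.card →
      ∀ r : Pt → ℝ, (∀ p ∈ P, α ≤ r p ∧ r p ≤ 1) →
        ∃ p q, (diskGraph P r).Adj p q) ∧
    ((6 * (2 / α + 1) ^ 2 : ℝ) < K.card →
      ∀ r : Pt → ℝ, (∀ p ∈ P, α ≤ r p ∧ r p ≤ 1) →
        ¬ (diskGraph P r).IsAcyclic) := by
  constructor
  · intro hcard r hr
    obtain ⟨p, hp, q, hq, hpq, hd⟩ := exists_close_pair α hα₀ K hclique hcard
    refine ⟨⟨p, hKP hp⟩, ⟨q, hKP hq⟩, (⟨?_, ?_⟩ : _ ∧ _)⟩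
    · simp [Subtype.ext_iff, hpq]
    · have h1 := (hr p (hKP hp)).1
      have h2 := (hr q (hKP hq)).1
      simpa using lt_of_lt_of_le hd (by linarith)
  · intro hcard r hr hacyc
    obtain ⟨a, ha, b, hb, c, hc, hab, hac, hbc, dab, dac, dbc⟩ :=
      exists_close_triple α hα₀ hα₁ K hclique hcard
    set G := diskGraph P r with hG
    have adj : ∀ x (hx : x ∈ K) y (hy : y ∈ K), x ≠ y → dist x y < 2 * α →
        G.Adj ⟨x, hKP hx⟩ ⟨y, hKP hy⟩ := by
      intro x hx y hy hxy hd
      refine (⟨by simp [Subtype.ext_iff, hxy], ?_⟩ : (⟨x, hKP hx⟩ : {x : Pt // x ∈ P}) ≠ ⟨y, hKP hy⟩ ∧ _)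
      have h1 := (hr x (hKP hx)).1
      have h2 := (hr y (hKP hy)).1
      simpa using lt_of_lt_of_le hd (by linarith)
    have hAB : G.Adj ⟨a, hKP ha⟩ ⟨b, hKP hb⟩ := adj a ha b hb hab dab
    have hBC : G.Adj ⟨b, hKP hb⟩ ⟨c, hKP hc⟩ := adj b hb c hc hbc dbc
    have hCA : G.Adj ⟨c, hKP hc⟩ ⟨a, hKP ha⟩ := (adj a ha c hc hac dac).symm
    set w : G.Walk ⟨a, hKP ha⟩ ⟨a, hKP ha⟩ :=
      SimpleGraph.Walk.cons hAB (SimpleGraph.Walk.cons hBC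
        (SimpleGraph.Walk.cons hCA SimpleGraph.Walk.nil)) with hw
    refine hacyc w ?_
    rw [hw, SimpleGraph.Walk.cons_isCycle_iff]
    constructor
    · rw [SimpleGraph.Walk.isPath_def]
      simp [SimpleGraph.Walk.support_cons, hBC.ne, hCA.ne, hBC.ne.symm, hCA.ne.symm,
        hAB.ne, hAB.ne.symm]
    · simp only [SimpleGraph.Walk.edges_cons, SimpleGraph.Walk.edges_nil, List.mem_cons,
        List.not_mem_nil, or_false]
      push_neg
      constructor <;>
        simp [Sym2.eq_iff, Subtype.ext_iff, hab, hbc, hac, Ne.symm hab, Ne.symm hbc, Ne.symm hac]
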